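/- Let π0 ∈ [0,1] and let G1 : [0,1] → ℝ be a nondecreasing concave function with G1(0) = 0 and G1(1) = 1; set G(u) = π0·u + (1−π0)·G1(u). Then the map λ ↦ (1−G(λ))/(1−λ) is nonincreasing on [0,1), and for every λ ∈ [0,1) one has π0 ≤ (1−G(λ))/(1−λ) ≤ 1. -/

import Mathlib

open Filter Set

/-- in the two-group mixture model `G = π0·id + (1−π0)·G1` with `G1`
nondecreasing, concave, `G1(0) = 0`, `G1(1) = 1`, the map
`λ ↦ (1−G(λ))/(1−λ)` is nonincreasing on `[0,1)` and takes values in `[π0, 1]`. -/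
theorem stmt_18 (π0 : ℝ) (G1 : ℝ → ℝ)
    (hπ0 : π0 ∈ Set.Icc (0:ℝ) 1)
    (hmono : MonotoneOn G1 (Set.Icc 0 1))
    (hconc : ConcaveOn ℝ (Set.Icc (0:ℝ) 1) G1)
    (h0 : G1 0 = 0) (h1 : G1 1 = 1) :
    AntitoneOn (fun l => (1 - (π0 * l + (1 - π0) * G1 l)) / (1 - l)) (Set.Ico (0:ℝ) 1) ∧
    ∀ l ∈ Set.Ico (0:ℝ) 1,
      π0 ≤ (1 - (π0 * l + (1 - π0) * G1 l)) / (1 - l) ∧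
      (1 - (π0 * l + (1 - π0) * G1 l)) / (1 - l) ≤ 1 := by
  obtain ⟨hπl, hπu⟩ := hπ0
  -- rewrite of the main expression
  have hrw : ∀ l ∈ Set.Ico (0:ℝ) 1,
      (1 - (π0 * l + (1 - π0) * G1 l)) / (1 - l)
        = π0 + (1 - π0) * ((1 - G1 l) / (1 - l)) := by
    intro l ⟨hl0, hl1⟩
    have h1l : (1:ℝ) - l ≠ 0 := by linarith
    field_simp
    ring
  -- key monotonicity of the slope (1 - G1 l)/(1 - l)
  have key : ∀ a ∈ Set.Ico (0:ℝ) 1, ∀ b ∈ Set.Ico (0:ℝ) 1, a ≤ b →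
      (1 - G1 b) / (1 - b) ≤ (1 - G1 a) / (1 - a) := by
    rintro a ⟨ha0, ha1⟩ b ⟨hb0, hb1⟩ hab
    have h1a : (0:ℝ) < 1 - a := by linarith
    have h1b : (0:ℝ) < 1 - b := by linarith
    set t : ℝ := (1 - b) / (1 - a) with ht
    have ht0 : 0 ≤ t := by positivity
    have ht1 : t ≤ 1 := by
      rw [div_le_one h1a]; linarith
    have hsum : t + (1 - t) = 1 := by ring
    have hcomb : t • a + (1 - t) • (1:ℝ) = b := by
      simp only [smul_eq_mul, ht]
      field_simp
      ring
    have hc := hconc.2 (Set.mem_Icc.mpr ⟨ha0, ha1.le⟩)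
      (Set.mem_Icc.mpr ⟨zero_le_one, le_refl 1⟩) ht0 (by linarith) hsum
    rw [hcomb] at hc
    simp only [smul_eq_mul, h1, mul_one] at hc
    -- hc : t * G1 a + (1 - t) ≤ G1 b
    have hle : 1 - G1 b ≤ t * (1 - G1 a) := by nlinarith
    rw [div_le_div_iff₀ h1b h1a]
    calc (1 - G1 b) * (1 - a) ≤ t * (1 - G1 a) * (1 - a) := by nlinarith
      _ = (1 - G1 a) * (1 - b) := by rw [ht]; field_simp
  -- bounds on G1
  have hGle : ∀ l ∈ Set.Ico (0:ℝ) 1, G1 l ≤ 1 := by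
    rintro l ⟨hl0, hl1⟩
    have := hmono (Set.mem_Icc.mpr ⟨hl0, hl1.le⟩)
      (Set.mem_Icc.mpr ⟨zero_le_one, le_refl 1⟩) hl1.le
    rwa [h1] at this
  have hGge : ∀ l ∈ Set.Ico (0:ℝ) 1, l ≤ G1 l := by
    rintro l ⟨hl0, hl1⟩
    have hc := hconc.2 (Set.mem_Icc.mpr ⟨le_refl 0, zero_le_one⟩)
      (Set.mem_Icc.mpr ⟨zero_le_one, le_refl 1⟩) (by linarith : (0:ℝ) ≤ 1 - l)
      hl0 (by ring)
    simp only [smul_eq_mul, h0, h1, mul_zero, mul_one, zero_add] at hc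
    linarith [hc]
  -- slope bounds
  have hq : ∀ l ∈ Set.Ico (0:ℝ) 1, 0 ≤ (1 - G1 l) / (1 - l) ∧ (1 - G1 l) / (1 - l) ≤ 1 := by
    intro l hl
    obtain ⟨hl0, hl1⟩ := hl
    have h1l : (0:ℝ) < 1 - l := by linarith
    constructor
    · apply div_nonneg _ h1l.le
      linarith [hGle l ⟨hl0, hl1⟩]
    · rw [div_le_one h1l]
      linarith [hGge l ⟨hl0, hl1⟩]
  constructor
  · intro a ha b hb hab
    show (1 - (π0 * b + (1 - π0) * G1 b)) / (1 - b) ≤ (1 - (π0 * a + (1 - π0) * G1 a)) / (1 - a)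
    rw [hrw a ha, hrw b hb]
    have := key a ha b hb hab
    nlinarith
  · intro l hl
    rw [hrw l hl]
    obtain ⟨hq0, hq1⟩ := hq l hl
    constructor
    · nlinarith
    · nlinarith
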